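/- Let γ_m : D → ℝⁿ be a sequence of C¹ embeddings of a disjoint union D of circles converging to a C¹ embedding γ uniformly in C¹ sense (both γ_m → γ and γ_m' → γ' uniformly), with K_m = γ_m(D) and K = γ(D). If liminf_m DCSD(K_m) > 0, then liminf_m DCSD(K_m) ≥ DCSD(K). -/

import Mathlib

open Filter

/-- Tangent vector of the parametrized link `γ : Fin k × ℝ → ℝⁿ`. -/
noncomputable def tang {n k : ℕ} (γ : Fin k × ℝ → EuclideanSpace ℝ (Fin n))
    (x : Fin k × ℝ) : EuclideanSpace ℝ (Fin n) :=
  deriv (fun s => γ (x.1, s)) x.2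

/-- The set of distances realized by double critical pairs of `γ`. -/
def dcDists {n k : ℕ} (γ : Fin k × ℝ → EuclideanSpace ℝ (Fin n)) : Set ℝ :=
  {r | ∃ x y : Fin k × ℝ, γ x ≠ γ y ∧
    (inner ℝ (γ x - γ y) (tang γ x) : ℝ) = 0 ∧
    (inner ℝ (γ x - γ y) (tang γ y) : ℝ) = 0 ∧
    r = dist (γ x) (γ y)}

/-- The double critical self distance of a link. -/
noncomputable def DCSD {n k : ℕ} (γ : Fin k × ℝ → EuclideanSpace ℝ (Fin n)) : ℝ :=
  sInf (dcDists γ)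

private lemma continuous_of_slices {X : Type*} [TopologicalSpace X] {k : ℕ}
    (f : Fin k × ℝ → X) (h : ∀ i, Continuous fun s => f (i, s)) : Continuous f := by
  rw [continuous_iff_continuousAt]
  rintro ⟨i, t⟩
  unfold ContinuousAt
  rw [nhds_prod_eq, nhds_discrete, Filter.pure_prod, Filter.tendsto_map'_iff]
  exact ((h i).tendsto t)

private lemma periodic_deriv' {E : Type*} [NormedAddCommGroup E] [NormedSpace ℝ E]
    {f : ℝ → E} {c : ℝ} (h : Function.Periodic f c) :
    Function.Periodic (deriv f) c := by
  intro x
  have hfc : (fun y => f (y + c)) = f := funext h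
  rw [← deriv_comp_add_const, hfc]

/-- Lower semicontinuity of DCSD under C¹-uniform convergence of embedded links:
if liminf DCSD(K_m) > 0 then liminf DCSD(K_m) ≥ DCSD(K). -/
theorem liminf_dcsd_ge {n k : ℕ}
    (γm : ℕ → Fin k × ℝ → EuclideanSpace ℝ (Fin n))
    (γ : Fin k × ℝ → EuclideanSpace ℝ (Fin n))
    (L : Fin k → ℝ) (hLpos : ∀ i, 0 < L i)
    (hsmooth : ∀ m i, ContDiff ℝ 1 (fun s => γm m (i, s)))
    (hsmooth' : ∀ i, ContDiff ℝ 1 (fun s => γ (i, s)))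
    (hper : ∀ m i, Function.Periodic (fun s => γm m (i, s)) (L i))
    (hper' : ∀ i, Function.Periodic (fun s => γ (i, s)) (L i))
    (hreg : ∀ m x, tang (γm m) x ≠ 0) (hreg' : ∀ x, tang γ x ≠ 0)
    (hinjm : ∀ m, ∀ x y : Fin k × ℝ, x.2 ∈ Set.Ico 0 (L x.1) →
      y.2 ∈ Set.Ico 0 (L y.1) → γm m x = γm m y → x = y)
    (hinj : ∀ x y : Fin k × ℝ, x.2 ∈ Set.Ico 0 (L x.1) →
      y.2 ∈ Set.Ico 0 (L y.1) → γ x = γ y → x = y)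
    (hconv : TendstoUniformly γm γ atTop)
    (hconv' : TendstoUniformly (fun m => tang (γm m)) (tang γ) atTop)
    (hpos : 0 < atTop.liminf (fun m => DCSD (γm m))) :
    DCSD γ ≤ atTop.liminf (fun m => DCSD (γm m)) := by
  classical
  set f : ℕ → ℝ := fun m => DCSD (γm m) with hf
  have hdc_nonneg : ∀ (δ : Fin k × ℝ → EuclideanSpace ℝ (Fin n)), ∀ r ∈ dcDists δ, (0:ℝ) ≤ r := by
    rintro δ r ⟨x, y, -, -, -, rfl⟩; exact dist_nonneg
  have hbddB : ∀ δ : Fin k × ℝ → EuclideanSpace ℝ (Fin n), BddBelow (dcDists δ) :=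
    fun δ => ⟨0, fun r hr => hdc_nonneg δ r hr⟩
  have hf0 : ∀ m, 0 ≤ f m := fun m => Real.sInf_nonneg (hdc_nonneg _)
  have hbdd : IsBoundedUnder (· ≥ ·) atTop f :=
    Filter.isBoundedUnder_of ⟨0, hf0⟩
  have hcb : IsCoboundedUnder (· ≥ ·) atTop f := by
    by_contra hcb
    have hnb : ¬ BddAbove {a : ℝ | ∀ᶠ m in atTop, a ≤ f m} := by
      rintro ⟨b, hb⟩
      exact hcb ⟨b, fun a ha => hb (by simpa [Filter.eventually_map] using ha)⟩
    have hz : atTop.liminf f = 0 := by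
      rw [Filter.liminf_eq]
      exact Real.sSup_of_not_bddAbove hnb
    rw [hf] at hz
    rw [hz] at hpos
    exact lt_irrefl 0 hpos
  set Λ := atTop.liminf f with hΛ
  have hΛpos : 0 < Λ := hpos
  set c := Λ / 2 with hc
  have hcpos : 0 < c := by positivity
  have hev : ∀ᶠ m in atTop, c < f m :=
    Filter.eventually_lt_of_lt_liminf (by rw [hc]; exact half_lt_self hΛpos) hbdd
  have hγcont : Continuous γ := continuous_of_slices γ (fun i => (hsmooth' i).continuous)
  have htangcont : Continuous (tang γ) := by
    apply continuous_of_slices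
    intro i
    have hrw : (fun s => tang γ (i, s)) = deriv (fun s => γ (i, s)) := rfl
    rw [hrw]
    exact (hsmooth' i).continuous_deriv le_rfl
  set C : Set (Fin k × ℝ) := ⋃ i, {i} ×ˢ Set.Icc 0 (L i) with hCdef
  have hCcomp : IsCompact C :=
    isCompact_iUnion fun i => isCompact_singleton.prod isCompact_Icc
  have hnorm : ∀ m (x : Fin k × ℝ), ∃ x' ∈ C,
      γm m x' = γm m x ∧ tang (γm m) x' = tang (γm m) x := by
    rintro m ⟨i, s⟩
    refine ⟨(i, s - ⌊s / L i⌋ * L i), ?_, ?_, ?_⟩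
    · refine Set.mem_iUnion.2 ⟨i, Set.mem_prod.2 ⟨rfl, ?_⟩⟩
      exact ⟨Int.sub_floor_div_mul_nonneg s (hLpos i),
        (Int.sub_floor_div_mul_lt s (hLpos i)).le⟩
    · exact (hper m i).sub_int_mul_eq (⌊s / L i⌋)
    · exact (periodic_deriv' (hper m i)).sub_int_mul_eq (⌊s / L i⌋)
  have main : ∀ ε > 0, DCSD γ ≤ Λ + ε := by
    intro ε hε
    have hfreq : ∃ᶠ m in atTop, f m < Λ + ε :=
      Filter.frequently_lt_of_liminf_lt hcb (by linarith)
    obtain ⟨φ, hφmono, hφ⟩ := Filter.extraction_of_frequently_atTop (hfreq.and_eventually hev)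
    have key : ∀ j, ∃ x y : Fin k × ℝ, x ∈ C ∧ y ∈ C ∧
        (inner ℝ (γm (φ j) x - γm (φ j) y) (tang (γm (φ j)) x) : ℝ) = 0 ∧
        (inner ℝ (γm (φ j) x - γm (φ j) y) (tang (γm (φ j)) y) : ℝ) = 0 ∧
        c ≤ dist (γm (φ j) x) (γm (φ j) y) ∧ dist (γm (φ j) x) (γm (φ j) y) < Λ + ε := by
      intro j
      obtain ⟨hlt, hgt⟩ := hφ j
      have hne : (dcDists (γm (φ j))).Nonempty := by
        by_contra hemp
        rw [Set.not_nonempty_iff_eq_empty] at hemp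
        have hz : f (φ j) = 0 := by simp [hf, DCSD, hemp]
        rw [hz] at hgt
        exact absurd hgt (not_lt.2 hcpos.le)
      obtain ⟨r, hr, hrlt⟩ := Real.lt_sInf_add_pos hne
        (show (0:ℝ) < Λ + ε - f (φ j) by linarith)
      have hrlt' : r < Λ + ε := by
        have : sInf (dcDists (γm (φ j))) = f (φ j) := rfl
        rw [this] at hrlt; linarith
      have hcr : c ≤ r := le_of_lt (lt_of_lt_of_le hgt (csInf_le (hbddB _) hr))
      obtain ⟨x0, y0, hne0, h10, h20, hre⟩ := hr
      obtain ⟨x, hxC, hgx, htx⟩ := hnorm (φ j) x0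
      obtain ⟨y, hyC, hgy, hty⟩ := hnorm (φ j) y0
      refine ⟨x, y, hxC, hyC, ?_, ?_, ?_, ?_⟩
      · rw [hgx, hgy, htx]; exact h10
      · rw [hgx, hgy, hty]; exact h20
      · rw [hgx, hgy, ← hre]; exact hcr
      · rw [hgx, hgy, ← hre]; exact hrlt'
    choose x y hxC hyC h1 h2 hclow hup using key
    obtain ⟨a, haC, ψ1, hψ1, hxa⟩ := hCcomp.tendsto_subseq hxC
    obtain ⟨b, hbC, ψ2, hψ2, hyb⟩ := hCcomp.tendsto_subseq (x := y ∘ ψ1) (fun j => hyC _)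
    set ρ : ℕ → ℕ := ψ1 ∘ ψ2 with hρ
    have hxa2 : Filter.Tendsto (fun j => x (ρ j)) atTop (nhds a) := hxa.comp hψ2.tendsto_atTop
    have hyb2 : Filter.Tendsto (fun j => y (ρ j)) atTop (nhds b) := hyb
    set σ : ℕ → ℕ := fun j => φ (ρ j) with hσdef
    have hσ : Filter.Tendsto σ atTop atTop := (hφmono.comp (hψ1.comp hψ2)).tendsto_atTop
    have hU : TendstoUniformly (fun j => γm (σ j)) γ atTop :=
      fun u hu => hσ.eventually (hconv u hu)
    have hU' : TendstoUniformly (fun j => tang (γm (σ j))) (tang γ) atTop :=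
      fun u hu => hσ.eventually (hconv' u hu)
    have hgxa : Filter.Tendsto (fun j => γm (σ j) (x (ρ j))) atTop (nhds (γ a)) :=
      hU.tendsto_comp hγcont.continuousAt hxa2
    have hgyb : Filter.Tendsto (fun j => γm (σ j) (y (ρ j))) atTop (nhds (γ b)) :=
      hU.tendsto_comp hγcont.continuousAt hyb2
    have htxa : Filter.Tendsto (fun j => tang (γm (σ j)) (x (ρ j))) atTop (nhds (tang γ a)) :=
      hU'.tendsto_comp htangcont.continuousAt hxa2
    have htyb : Filter.Tendsto (fun j => tang (γm (σ j)) (y (ρ j))) atTop (nhds (tang γ b)) :=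
      hU'.tendsto_comp htangcont.continuousAt hyb2
    have hdist : Filter.Tendsto
        (fun j => dist (γm (σ j) (x (ρ j))) (γm (σ j) (y (ρ j)))) atTop
        (nhds (dist (γ a) (γ b))) := hgxa.dist hgyb
    have hcle : c ≤ dist (γ a) (γ b) :=
      ge_of_tendsto hdist (Filter.Eventually.of_forall fun j => hclow (ρ j))
    have hub : dist (γ a) (γ b) ≤ Λ + ε :=
      le_of_tendsto hdist (Filter.Eventually.of_forall fun j => (hup (ρ j)).le)
    have hinner1 : (inner ℝ (γ a - γ b) (tang γ a) : ℝ) = 0 := by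
      have ht := (hgxa.sub hgyb).inner (𝕜 := ℝ) htxa
      have heq : (fun j => (inner ℝ (γm (σ j) (x (ρ j)) - γm (σ j) (y (ρ j)))
          (tang (γm (σ j)) (x (ρ j))) : ℝ)) = fun _ => (0:ℝ) :=
        funext fun j => h1 (ρ j)
      rw [heq] at ht
      exact (tendsto_nhds_unique ht tendsto_const_nhds)
    have hinner2 : (inner ℝ (γ a - γ b) (tang γ b) : ℝ) = 0 := by
      have ht := (hgxa.sub hgyb).inner (𝕜 := ℝ) htyb
      have heq : (fun j => (inner ℝ (γm (σ j) (x (ρ j)) - γm (σ j) (y (ρ j)))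
          (tang (γm (σ j)) (y (ρ j))) : ℝ)) = fun _ => (0:ℝ) :=
        funext fun j => h2 (ρ j)
      rw [heq] at ht
      exact (tendsto_nhds_unique ht tendsto_const_nhds)
    have hneq : γ a ≠ γ b := by
      intro h
      rw [h, dist_self] at hcle
      exact absurd hcle (not_le.2 hcpos)
    have hmem : dist (γ a) (γ b) ∈ dcDists γ := ⟨a, b, hneq, hinner1, hinner2, rfl⟩
    calc DCSD γ ≤ dist (γ a) (γ b) := csInf_le (hbddB γ) hmem
      _ ≤ Λ + ε := hub
  exact le_of_forall_pos_le_add main
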